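/- If X is a real random variable with |X| ≤ c₀ almost surely and E[X] = 0, then log E[exp(λX)] ≥ (1/2)·Var[X]·λ² − c₀³|λ|³·e^{c₀|λ|} for all real λ. In particular, if Var[X] ≥ c₁ > 0, then for sufficiently small |λ|, log E[exp(λX)] ≥ (c₁/4)λ². -/

import Mathlib

open MeasureTheory Real Finset

lemma cubic_lower {t : ℝ} (ht : |t| ≤ 1) :
    1 + t + t ^ 2 / 2 - (2/9) * |t| ^ 3 ≤ Real.exp t := by
  have h := Real.exp_bound ht (n := 3) (by norm_num)
  have hsum : ∑ m ∈ range 3, t ^ m / m.factorial = 1 + t + t ^ 2 / 2 := by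
    simp [Finset.sum_range_succ, Nat.factorial]
  rw [hsum] at h
  have := abs_le.1 h
  have h2 : ((3:ℕ).succ / ((3:ℕ).factorial * (3:ℕ)) : ℝ) = 2/9 := by
    norm_num [Nat.factorial]
  nlinarith [this.1, abs_nonneg t]

lemma quad_upper {t : ℝ} (ht : |t| ≤ 1) : Real.exp t ≤ 1 + t + t ^ 2 := by
  have h := Real.abs_exp_sub_one_sub_id_le ht
  have := abs_le.1 h
  linarith [this.2]

set_option maxHeartbeats 1000000 in
theorem log_mgf_lower_bound
    {Ω : Type*} [MeasurableSpace Ω] (μ : Measure Ω) [IsProbabilityMeasure μ]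
    (X : Ω → ℝ) (hX : Measurable X) (c₀ c₁ : ℝ) (hc₀ : 0 < c₀) (hc₁ : 0 < c₁)
    (hbd : ∀ᵐ ω ∂μ, |X ω| ≤ c₀) (hcen : ∫ ω, X ω ∂μ = 0)
    (hvar : c₁ ≤ ∫ ω, (X ω) ^ 2 ∂μ) :
    (∀ l : ℝ, Real.log (∫ ω, Real.exp (l * X ω) ∂μ) ≥
        (1 / 2) * (∫ ω, (X ω) ^ 2 ∂μ) * l ^ 2
          - c₀ ^ 3 * |l| ^ 3 * Real.exp (c₀ * |l|)) ∧
    (∃ ε > 0, ∀ l : ℝ, |l| ≤ ε →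
        Real.log (∫ ω, Real.exp (l * X ω) ∂μ) ≥ (c₁ / 4) * l ^ 2) := by
  have hXm : AEStronglyMeasurable X μ := hX.aestronglyMeasurable
  have hXint : Integrable X μ := by
    refine Integrable.mono' (integrable_const c₀) hXm ?_
    filter_upwards [hbd] with ω h
    simpa [Real.norm_eq_abs] using h
  have hX2int : Integrable (fun ω => (X ω) ^ 2) μ := by
    refine Integrable.mono' (integrable_const (c₀ ^ 2)) ((hX.pow_const 2).aestronglyMeasurable) ?_
    filter_upwards [hbd] with ω h
    rw [Real.norm_eq_abs, abs_pow]
    exact pow_le_pow_left₀ (abs_nonneg _) h 2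
  set V := ∫ ω, (X ω) ^ 2 ∂μ with hVdef
  have hV0 : 0 ≤ V := integral_nonneg fun ω => sq_nonneg _
  have hVc : V ≤ c₀ ^ 2 := by
    have hae : ∀ᵐ ω ∂μ, (X ω) ^ 2 ≤ c₀ ^ 2 := by
      filter_upwards [hbd] with ω h
      calc (X ω) ^ 2 = |X ω| ^ 2 := (sq_abs _).symm
      _ ≤ c₀ ^ 2 := pow_le_pow_left₀ (abs_nonneg _) h 2
    calc V ≤ ∫ _, c₀ ^ 2 ∂μ := integral_mono_ae hX2int (integrable_const _) hae
    _ = c₀ ^ 2 := by simp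
  -- helper: integral of affine-quadratic functions
  have hlin : ∀ a b c : ℝ,
      ∫ ω, (a + b * X ω + c * (X ω) ^ 2) ∂μ = a + c * V := by
    intro a b c
    have hi1 : Integrable (fun ω => a + b * X ω) μ :=
      (integrable_const a).add (hXint.const_mul b)
    have hi2 : Integrable (fun ω => c * (X ω) ^ 2) μ := hX2int.const_mul c
    rw [integral_add hi1 hi2, integral_add (integrable_const a) (hXint.const_mul b),
      integral_const, integral_const_mul, integral_const_mul, hcen, mul_zero, add_zero,
      probReal_univ, smul_eq_mul, one_mul, ← hVdef]
  have hmain : ∀ l : ℝ, Real.log (∫ ω, Real.exp (l * X ω) ∂μ) ≥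
      (1 / 2) * V * l ^ 2 - c₀ ^ 3 * |l| ^ 3 * Real.exp (c₀ * |l|) := by
    intro l
    have hexpm : AEStronglyMeasurable (fun ω => Real.exp (l * X ω)) μ :=
      (Real.measurable_exp.comp (hX.const_mul l)).aestronglyMeasurable
    have hexpint : Integrable (fun ω => Real.exp (l * X ω)) μ := by
      refine Integrable.mono' (integrable_const (Real.exp (|l| * c₀))) hexpm ?_
      filter_upwards [hbd] with ω h
      rw [Real.norm_eq_abs, abs_of_pos (Real.exp_pos _)]
      apply Real.exp_le_exp.2
      calc l * X ω ≤ |l * X ω| := le_abs_self _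
      _ = |l| * |X ω| := abs_mul _ _
      _ ≤ |l| * c₀ := mul_le_mul_of_nonneg_left h (abs_nonneg l)
    set I := ∫ ω, Real.exp (l * X ω) ∂μ with hIdef
    have h1 : 1 ≤ I := by
      have hpt : ∀ᵐ ω ∂μ, 1 + l * X ω + 0 * (X ω) ^ 2 ≤ Real.exp (l * X ω) :=
        Filter.Eventually.of_forall fun ω => by
          have := Real.add_one_le_exp (l * X ω); linarith
      have hi : Integrable (fun ω => 1 + l * X ω + 0 * (X ω) ^ 2) μ :=
        ((integrable_const _).add (hXint.const_mul l)).add (hX2int.const_mul 0)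
      have := integral_mono_ae hi hexpint hpt
      rwa [hlin 1 l 0, zero_mul, add_zero] at this
    rcases le_or_gt ((1 / 2) * V * l ^ 2 - c₀ ^ 3 * |l| ^ 3 * Real.exp (c₀ * |l|)) 0 with hs | hs
    · exact le_trans hs (Real.log_nonneg h1)
    · have hexp1 : (1:ℝ) ≤ Real.exp (c₀ * |l|) := Real.one_le_exp (by positivity)
      have hl0 : l ≠ 0 := by rintro rfl; simp at hs
      have hlpos : 0 < |l| := abs_pos.2 hl0
      have hsq : |l| ^ 2 = l ^ 2 := sq_abs l
      have hcl : c₀ * |l| < 1 / 2 := by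
        have h3 : c₀ ^ 3 * |l| ^ 3 ≤ c₀ ^ 3 * |l| ^ 3 * Real.exp (c₀ * |l|) :=
          le_mul_of_one_le_right (by positivity) hexp1
        have h4 : c₀ ^ 3 * |l| ^ 3 < (1 / 2) * c₀ ^ 2 * l ^ 2 := by
          have h5 : (1 / 2) * V * l ^ 2 ≤ (1 / 2) * c₀ ^ 2 * l ^ 2 := by
            nlinarith [sq_nonneg l]
          linarith
        by_contra hcon
        push_neg at hcon
        have hpos : (0:ℝ) ≤ c₀ ^ 2 * |l| ^ 2 := by positivity
        nlinarith [mul_le_mul_of_nonneg_right hcon hpos]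
      have hae1 : ∀ᵐ ω ∂μ, |l * X ω| ≤ 1 := by
        filter_upwards [hbd] with ω h
        rw [abs_mul]
        calc |l| * |X ω| ≤ |l| * c₀ := mul_le_mul_of_nonneg_left h (abs_nonneg l)
        _ = c₀ * |l| := mul_comm _ _
        _ ≤ 1 := by linarith
      -- lower bound for I
      have hlow : (1 - (2/9) * c₀ ^ 3 * |l| ^ 3) + (l ^ 2 / 2) * V ≤ I := by
        have hpt : ∀ᵐ ω ∂μ,
            (1 - (2/9) * c₀ ^ 3 * |l| ^ 3) + l * X ω + (l ^ 2 / 2) * (X ω) ^ 2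
              ≤ Real.exp (l * X ω) := by
          filter_upwards [hbd, hae1] with ω hb h1'
          have hc := cubic_lower h1'
          have habs : |l * X ω| ^ 3 ≤ c₀ ^ 3 * |l| ^ 3 := by
            rw [abs_mul]
            calc (|l| * |X ω|) ^ 3 ≤ (|l| * c₀) ^ 3 := by
                  apply pow_le_pow_left₀ (by positivity)
                  exact mul_le_mul_of_nonneg_left hb (abs_nonneg l)
            _ = c₀ ^ 3 * |l| ^ 3 := by ring
          nlinarith [hc, habs]
        have hi : Integrable (fun ω =>
            (1 - (2/9) * c₀ ^ 3 * |l| ^ 3) + l * X ω + (l ^ 2 / 2) * (X ω) ^ 2) μ :=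
          ((integrable_const _).add (hXint.const_mul l)).add (hX2int.const_mul _)
        have := integral_mono_ae hi hexpint hpt
        rwa [hlin _ l _] at this
      -- upper bound for I
      have hup : I ≤ 1 + c₀ ^ 2 * l ^ 2 := by
        have hpt : ∀ᵐ ω ∂μ, Real.exp (l * X ω) ≤
            (1 + c₀ ^ 2 * l ^ 2) + l * X ω + 0 * (X ω) ^ 2 := by
          filter_upwards [hbd, hae1] with ω hb h1'
          have hq := quad_upper h1'
          have habs : (l * X ω) ^ 2 ≤ c₀ ^ 2 * l ^ 2 := by
            have h6 : |l * X ω| ^ 2 ≤ (|l| * c₀) ^ 2 := by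
              apply pow_le_pow_left₀ (abs_nonneg _)
              rw [abs_mul]
              exact mul_le_mul_of_nonneg_left hb (abs_nonneg l)
            rw [sq_abs] at h6
            nlinarith [h6, hsq]
          linarith
        have hi : Integrable (fun ω => (1 + c₀ ^ 2 * l ^ 2) + l * X ω + 0 * (X ω) ^ 2) μ :=
          ((integrable_const _).add (hXint.const_mul l)).add (hX2int.const_mul 0)
        have := integral_mono_ae hexpint hi hpt
        rwa [hlin _ l 0, zero_mul, add_zero] at this
      have hI0 : (0:ℝ) < I := lt_of_lt_of_le one_pos h1
      -- log lower bound: log I ≥ (I-1) - (I-1)^2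
      have hlog : (I - 1) - (I - 1) ^ 2 ≤ Real.log I := by
        have hlog1 : 1 - I⁻¹ ≤ Real.log I := by
          have h := Real.log_le_sub_one_of_pos (inv_pos.2 hI0)
          rw [Real.log_inv] at h
          linarith
        have key : ((I - 1) - (I - 1) ^ 2) * I ≤ I - 1 := by
          nlinarith [pow_nonneg (by linarith : (0:ℝ) ≤ I - 1) 3]
        have hdiv : (I - 1) - (I - 1) ^ 2 ≤ (I - 1) / I := (le_div_iff₀ hI0).2 key
        have heq : (I - 1) / I = 1 - I⁻¹ := by field_simp
        linarith [hdiv, heq ▸ hdiv]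
      have hu2 : (I - 1) ^ 2 ≤ c₀ ^ 4 * l ^ 4 := by
        have := pow_le_pow_left₀ (by linarith : (0:ℝ) ≤ I - 1) (by linarith : I - 1 ≤ c₀ ^ 2 * l ^ 2) 2
        nlinarith [this]
      have h44 : |l| ^ 4 = l ^ 4 := by
        rw [← abs_pow]; exact abs_of_nonneg (by positivity)
      have hkey : (2/9) * c₀ ^ 3 * |l| ^ 3 + c₀ ^ 4 * l ^ 4 ≤
          c₀ ^ 3 * |l| ^ 3 * Real.exp (c₀ * |l|) := by
        have hfac : (2/9:ℝ) + c₀ * |l| ≤ Real.exp (c₀ * |l|) := by linarith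
        have hA : (0:ℝ) ≤ c₀ ^ 3 * |l| ^ 3 := by positivity
        have h4' : (2/9) * c₀ ^ 3 * |l| ^ 3 + c₀ ^ 4 * |l| ^ 4 =
            (c₀ ^ 3 * |l| ^ 3) * ((2/9) + c₀ * |l|) := by ring
        calc (2/9) * c₀ ^ 3 * |l| ^ 3 + c₀ ^ 4 * l ^ 4
            = (c₀ ^ 3 * |l| ^ 3) * ((2/9) + c₀ * |l|) := by rw [← h44]; ring
        _ ≤ (c₀ ^ 3 * |l| ^ 3) * Real.exp (c₀ * |l|) :=
            mul_le_mul_of_nonneg_left hfac hA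
      calc (1 / 2) * V * l ^ 2 - c₀ ^ 3 * |l| ^ 3 * Real.exp (c₀ * |l|)
          ≤ (I - 1) - (I - 1) ^ 2 := by nlinarith [hlow, hu2, hkey]
      _ ≤ Real.log I := hlog
  refine ⟨hmain, ?_⟩
  refine ⟨min 1 (c₁ / (4 * c₀ ^ 3 * Real.exp c₀)), lt_min one_pos (by positivity), fun l hl => ?_⟩
  have h1 := hmain l
  have hl1 : |l| ≤ 1 := le_trans hl (min_le_left _ _)
  have hl2 : |l| ≤ c₁ / (4 * c₀ ^ 3 * Real.exp c₀) := le_trans hl (min_le_right _ _)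
  have hexp : Real.exp (c₀ * |l|) ≤ Real.exp c₀ := by
    apply Real.exp_le_exp.2
    calc c₀ * |l| ≤ c₀ * 1 := mul_le_mul_of_nonneg_left hl1 hc₀.le
    _ = c₀ := mul_one _
  have hsq : |l| ^ 2 = l ^ 2 := sq_abs l
  have hcube : c₀ ^ 3 * |l| ^ 3 * Real.exp (c₀ * |l|) ≤ (c₁ / 4) * l ^ 2 := by
    have h3 : |l| ^ 3 = l ^ 2 * |l| := by rw [pow_succ, hsq]
    have hla : c₀ ^ 3 * Real.exp c₀ * |l| ≤ c₁ / 4 := by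
      calc c₀ ^ 3 * Real.exp c₀ * |l| ≤ c₀ ^ 3 * Real.exp c₀ *
            (c₁ / (4 * c₀ ^ 3 * Real.exp c₀)) :=
            mul_le_mul_of_nonneg_left hl2 (by positivity)
      _ = c₁ / 4 := by
            field_simp
    calc c₀ ^ 3 * |l| ^ 3 * Real.exp (c₀ * |l|)
        ≤ c₀ ^ 3 * |l| ^ 3 * Real.exp c₀ :=
          mul_le_mul_of_nonneg_left hexp (by positivity)
    _ = (c₀ ^ 3 * Real.exp c₀ * |l|) * l ^ 2 := by rw [h3]; ring
    _ ≤ (c₁ / 4) * l ^ 2 := mul_le_mul_of_nonneg_right hla (sq_nonneg l)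
  have hVl : (c₁ / 2) * l ^ 2 ≤ (1 / 2) * V * l ^ 2 := by nlinarith [sq_nonneg l, hvar]
  calc (c₁ / 4) * l ^ 2 = (c₁ / 2) * l ^ 2 - (c₁ / 4) * l ^ 2 := by ring
  _ ≤ (1 / 2) * V * l ^ 2 - c₀ ^ 3 * |l| ^ 3 * Real.exp (c₀ * |l|) := by linarith
  _ ≤ Real.log (∫ ω, Real.exp (l * X ω) ∂μ) := h1
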